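/- Fix t ≥ 1, real numbers ℓ₁, …, ℓ_t, f ∈ ℝ, and c > 0. Let w₁, …, w_t ∈ (0,1] with w₁ = 1, define w_s^t := w_s ∏_{j=s+1}^{t} (1 − w_j) for 1 ≤ s ≤ t and w₀^t := 0, and assume the sequence (w_i^t)_{i=0}^{t} is nondecreasing in i. Define f_t := ∑_{s=1}^{t} w_s^t ℓ_s and F_i := (t − i + 1)⁻¹ ∑_{s=i}^{t} ℓ_s for 1 ≤ i ≤ t. If |F_i − f| ≤ c / √(t − i + 1) for every 1 ≤ i ≤ t, then |f_t − f| ≤ c √t · w_t. -/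
import Mathlib


/-- deterministic deviation bound for weighted empirical averages.
If the weights `w_i^t` are nondecreasing in `i` and each tail average satisfies
`|F_i − f| ≤ c/√(t−i+1)`, then `|f_t − f| ≤ c √t · w_t`. -/
theorem stmt14 (t : ℕ) (ht : 1 ≤ t) (ℓ : ℕ → ℝ) (f c : ℝ) (hc : 0 < c)
    (w : ℕ → ℝ) (hw : ∀ s, 1 ≤ s → s ≤ t → 0 < w s ∧ w s ≤ 1) (hw1 : w 1 = 1)
    (wst : ℕ → ℝ) (hwst0 : wst 0 = 0)
    (hwst : ∀ s, 1 ≤ s → s ≤ t → wst s = w s * ∏ j ∈ Finset.Icc (s + 1) t, (1 - w j))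
    (hmono : ∀ i j, i ≤ j → j ≤ t → wst i ≤ wst j)
    (ft : ℝ) (hft : ft = ∑ s ∈ Finset.Icc 1 t, wst s * ℓ s)
    (F : ℕ → ℝ)
    (hF : ∀ i, 1 ≤ i → i ≤ t → F i = ((t - i + 1 : ℕ) : ℝ)⁻¹ * ∑ s ∈ Finset.Icc i t, ℓ s)
    (hFbound : ∀ i, 1 ≤ i → i ≤ t → |F i - f| ≤ c / Real.sqrt ((t - i + 1 : ℕ) : ℝ)) :
    |ft - f| ≤ c * Real.sqrt (t : ℝ) * w t := by
  set P : ℕ → ℝ := fun s => ∏ j ∈ Finset.Icc (s + 1) t, (1 - w j) with hP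
  -- wst as a difference of products
  have hwst_diff : ∀ s, 1 ≤ s → s ≤ t → wst s = P s - P (s - 1) := by
    intro s h1 h2
    have hps : P (s - 1) = (1 - w s) * P s := by
      have hs : s - 1 + 1 = s := Nat.succ_pred_eq_of_pos h1
      simp only [hP, hs]
      rw [← Finset.Ico_add_one_right_eq_Icc, ← Finset.Ico_add_one_right_eq_Icc,
        Finset.prod_eq_prod_Ico_succ_bot (by omega : s < t + 1)]
    rw [hwst s h1 h2, hps]
    ring
  -- telescoping sum of wst differences
  have tele : ∀ s, ∑ i ∈ Finset.Icc 1 s, (wst i - wst (i - 1)) = wst s := by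
    intro s
    rw [← Finset.Ico_add_one_right_eq_Icc, Finset.sum_Ico_eq_sum_range]
    have : ∀ i ∈ Finset.range (s + 1 - 1), wst (1 + i) - wst (1 + i - 1) = wst (i + 1) - wst i := by
      intro i _
      congr 2 <;> omega
    rw [Finset.sum_congr rfl this, show s + 1 - 1 = s from rfl, Finset.sum_range_sub wst s,
      hwst0, sub_zero]
  -- the weights sum to one
  have hsum1 : ∑ s ∈ Finset.Icc 1 t, wst s = 1 := by
    have h1 : ∀ s ∈ Finset.Icc 1 t, wst s = P s - P (s - 1) := by
      intro s hs
      simp only [Finset.mem_Icc] at hs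
      exact hwst_diff s hs.1 hs.2
    rw [Finset.sum_congr rfl h1, ← Finset.Ico_add_one_right_eq_Icc, Finset.sum_Ico_eq_sum_range]
    have h2 : ∀ i ∈ Finset.range (t + 1 - 1), P (1 + i) - P (1 + i - 1) = P (i + 1) - P i := by
      intro i _
      congr 2 <;> omega
    rw [Finset.sum_congr rfl h2, show t + 1 - 1 = t from rfl, Finset.sum_range_sub P t]
    have hPt : P t = 1 := by
      simp [hP, Finset.Icc_eq_empty (by omega : ¬ t + 1 ≤ t)]
    have hP0 : P 0 = 0 := by
      simp only [hP]
      refine Finset.prod_eq_zero (Finset.mem_Icc.mpr ⟨le_refl 1, ht⟩) ?_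
      rw [hw1]; ring
    rw [hPt, hP0, sub_zero]
  -- Abel summation / swap lemma
  have swap : ∀ g : ℕ → ℝ,
      ∑ i ∈ Finset.Icc 1 t, (wst i - wst (i - 1)) * ∑ s ∈ Finset.Icc i t, g s
      = ∑ s ∈ Finset.Icc 1 t, wst s * g s := by
    intro g
    have h1 : ∀ i ∈ Finset.Icc 1 t,
        (wst i - wst (i - 1)) * ∑ s ∈ Finset.Icc i t, g s
        = ∑ s ∈ Finset.Icc i t, (wst i - wst (i - 1)) * g s := by
      intro i _; rw [Finset.mul_sum]
    rw [Finset.sum_congr rfl h1]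
    rw [Finset.sum_comm' (s := Finset.Icc 1 t) (t := fun i => Finset.Icc i t)
      (t' := Finset.Icc 1 t) (s' := fun s => Finset.Icc 1 s)
      (by intro i s; simp only [Finset.mem_Icc]; omega)]
    refine Finset.sum_congr rfl ?_
    intro s _
    rw [← Finset.sum_mul, tele s]
  -- key identity: ft - f = ∑ D i * (tail sum of (ℓ s - f))
  have key : ft - f
      = ∑ i ∈ Finset.Icc 1 t, (wst i - wst (i - 1)) * ∑ s ∈ Finset.Icc i t, (ℓ s - f) := by
    rw [swap (fun s => ℓ s - f)]
    simp only [mul_sub]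
    rw [Finset.sum_sub_distrib, ← Finset.sum_mul, hsum1, one_mul, hft]
  -- rewrite tail sums via F
  have tailF : ∀ i, 1 ≤ i → i ≤ t →
      ∑ s ∈ Finset.Icc i t, (ℓ s - f) = ((t - i + 1 : ℕ) : ℝ) * (F i - f) := by
    intro i h1 h2
    have hcard : (Finset.Icc i t).card = t - i + 1 := by
      rw [Nat.card_Icc]; omega
    have hn : ((t - i + 1 : ℕ) : ℝ) ≠ 0 := by
      positivity
    rw [Finset.sum_sub_distrib, Finset.sum_const, hcard, nsmul_eq_mul, mul_sub,
      hF i h1 h2, ← mul_assoc, mul_inv_cancel₀ hn, one_mul]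
  -- nonnegativity of the differences
  have hD : ∀ i, 1 ≤ i → i ≤ t → 0 ≤ wst i - wst (i - 1) := by
    intro i h1 h2
    have := hmono (i - 1) i (by omega) h2
    linarith
  -- bound each term
  have hterm : ∀ i ∈ Finset.Icc 1 t,
      |(wst i - wst (i - 1)) * ∑ s ∈ Finset.Icc i t, (ℓ s - f)|
      ≤ (wst i - wst (i - 1)) * (c * Real.sqrt (t : ℝ)) := by
    intro i hi
    simp only [Finset.mem_Icc] at hi
    obtain ⟨h1, h2⟩ := hi
    rw [tailF i h1 h2, abs_mul, abs_mul,
      abs_of_nonneg (hD i h1 h2), abs_of_nonneg (by positivity : (0:ℝ) ≤ ((t - i + 1 : ℕ) : ℝ))]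
    refine mul_le_mul_of_nonneg_left ?_ (hD i h1 h2)
    have hnpos : (0:ℝ) < ((t - i + 1 : ℕ) : ℝ) := by positivity
    have hsq : Real.sqrt ((t - i + 1 : ℕ) : ℝ) * Real.sqrt ((t - i + 1 : ℕ) : ℝ)
        = ((t - i + 1 : ℕ) : ℝ) := Real.mul_self_sqrt (le_of_lt hnpos)
    have hsqpos : 0 < Real.sqrt ((t - i + 1 : ℕ) : ℝ) := Real.sqrt_pos.mpr hnpos
    calc ((t - i + 1 : ℕ) : ℝ) * |F i - f|
        ≤ ((t - i + 1 : ℕ) : ℝ) * (c / Real.sqrt ((t - i + 1 : ℕ) : ℝ)) :=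
          mul_le_mul_of_nonneg_left (hFbound i h1 h2) (le_of_lt hnpos)
      _ = c * Real.sqrt ((t - i + 1 : ℕ) : ℝ) := by
          rw [mul_comm, div_mul_eq_mul_div, mul_div_assoc, Real.div_sqrt]
      _ ≤ c * Real.sqrt (t : ℝ) := by
          refine mul_le_mul_of_nonneg_left ?_ (le_of_lt hc)
          refine Real.sqrt_le_sqrt ?_
          exact_mod_cast (by omega : t - i + 1 ≤ t)
  -- conclude
  have hwt : wst t = w t := by
    rw [hwst t ht le_rfl, Finset.Icc_eq_empty (by omega : ¬ t + 1 ≤ t), Finset.prod_empty,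
      mul_one]
  calc |ft - f|
      = |∑ i ∈ Finset.Icc 1 t, (wst i - wst (i - 1)) * ∑ s ∈ Finset.Icc i t, (ℓ s - f)| := by
        rw [key]
    _ ≤ ∑ i ∈ Finset.Icc 1 t,
        |(wst i - wst (i - 1)) * ∑ s ∈ Finset.Icc i t, (ℓ s - f)| :=
        Finset.abs_sum_le_sum_abs _ _
    _ ≤ ∑ i ∈ Finset.Icc 1 t, (wst i - wst (i - 1)) * (c * Real.sqrt (t : ℝ)) :=
        Finset.sum_le_sum hterm
    _ = (∑ i ∈ Finset.Icc 1 t, (wst i - wst (i - 1))) * (c * Real.sqrt (t : ℝ)) :=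
        (Finset.sum_mul _ _ _).symm
    _ = c * Real.sqrt (t : ℝ) * w t := by rw [tele t, hwt]; ring
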